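/- Let β > 0 and A : ℤ × ℤ → M₂(ℂ) with |A|_{β+} := sup_{s,s'} (1 + ||s|−|s'||)⟨s⟩^β⟨s'⟩^β ‖A_s^{s'}‖_∞ < ∞, and let ζ = (ζ_s)_{s∈ℤ} with ζ_s ∈ ℂ² and |ζ|_β := sup_s |ζ_s| ⟨s⟩^β < ∞. Then Aζ, defined by (Aζ)_s = ∑_k A_s^k ζ_k, satisfies |Aζ|_β ≤ C |A|_{β+} |ζ|_β for a constant C depending only on β. -/

import Mathlib

/-- Entrywise sup norm on `2×2` complex matrices. -/
noncomputable def mnorm (M : Matrix (Fin 2) (Fin 2) ℂ) : ℝ :=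
  ⨆ i : Fin 2, ⨆ j : Fin 2, ‖M i j‖

/-- Euclidean norm of a vector in `ℂ²`. -/
noncomputable def vnorm (v : Fin 2 → ℂ) : ℝ :=
  Real.sqrt (‖v 0‖ ^ 2 + ‖v 1‖ ^ 2)

lemma abs_le_mnorm (M : Matrix (Fin 2) (Fin 2) ℂ) (i j : Fin 2) :
    ‖M i j‖ ≤ mnorm M := by
  have h1 : ‖M i j‖ ≤ ⨆ j', ‖M i j'‖ :=
    le_ciSup (f := fun j' => ‖M i j'‖) (Finite.bddAbove_range _) j
  exact h1.trans (le_ciSup (f := fun i' => ⨆ j', ‖M i' j'‖)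
    (Finite.bddAbove_range _) i)

lemma mnorm_nonneg (M : Matrix (Fin 2) (Fin 2) ℂ) : 0 ≤ mnorm M :=
  le_trans (norm_nonneg _) (abs_le_mnorm M 0 0)

lemma vnorm_nonneg (v : Fin 2 → ℂ) : 0 ≤ vnorm v := Real.sqrt_nonneg _

lemma abs_apply_le_vnorm (v : Fin 2 → ℂ) (i : Fin 2) : ‖v i‖ ≤ vnorm v := by
  have h0 : ‖v i‖ = Real.sqrt ((‖v i‖)^2) :=
    (Real.sqrt_sq (norm_nonneg _)).symm
  rw [h0]
  apply Real.sqrt_le_sqrt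
  fin_cases i <;> simp <;> nlinarith [norm_nonneg (v 0),
    norm_nonneg (v 1), sq_nonneg (‖v 0‖),
    sq_nonneg (‖v 1‖)]

lemma norm_le_vnorm (v : Fin 2 → ℂ) : ‖v‖ ≤ vnorm v := by
  rw [pi_norm_le_iff_of_nonneg (vnorm_nonneg v)]
  intro i
  exact abs_apply_le_vnorm v i

lemma vnorm_le_norm (v : Fin 2 → ℂ) : vnorm v ≤ Real.sqrt 2 * ‖v‖ := by
  have h0 : ‖v 0‖ ≤ ‖v‖ := by exact norm_le_pi_norm v 0
  have h1 : ‖v 1‖ ≤ ‖v‖ := by exact norm_le_pi_norm v 1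
  have hn : (0:ℝ) ≤ ‖v‖ := norm_nonneg v
  have : vnorm v ≤ Real.sqrt (2 * ‖v‖^2) := by
    apply Real.sqrt_le_sqrt
    nlinarith [norm_nonneg (v 0), norm_nonneg (v 1)]
  calc vnorm v ≤ Real.sqrt (2 * ‖v‖^2) := this
    _ = Real.sqrt 2 * ‖v‖ := by
        rw [Real.sqrt_mul (by norm_num), Real.sqrt_sq hn]

lemma norm_mulVec_le (M : Matrix (Fin 2) (Fin 2) ℂ) (v : Fin 2 → ℂ) :
    ‖M.mulVec v‖ ≤ 2 * mnorm M * vnorm v := by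
  rw [pi_norm_le_iff_of_nonneg
    (mul_nonneg (mul_nonneg (by norm_num) (mnorm_nonneg M)) (vnorm_nonneg v))]
  intro i
  have e : M.mulVec v i = M i 0 * v 0 + M i 1 * v 1 := by
    simp [Matrix.mulVec, dotProduct, Fin.sum_univ_two]
  rw [e]
  calc ‖M i 0 * v 0 + M i 1 * v 1‖
      ≤ ‖M i 0 * v 0‖ + ‖M i 1 * v 1‖ := norm_add_le _ _
    _ = ‖M i 0‖ * ‖v 0‖ + ‖M i 1‖ * ‖v 1‖ := by
        simp [map_mul]
    _ ≤ mnorm M * vnorm v + mnorm M * vnorm v :=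
        add_le_add
          (mul_le_mul (abs_le_mnorm M i 0) (abs_apply_le_vnorm v 0)
            (norm_nonneg _) (mnorm_nonneg M))
          (mul_le_mul (abs_le_mnorm M i 1) (abs_apply_le_vnorm v 1)
            (norm_nonneg _) (mnorm_nonneg M))
    _ = 2 * mnorm M * vnorm v := by ring

lemma young_aux {p q x y : ℝ} (hp : 1 < p) (hpq : (p-1)*(q-1) = 1)
    (hx : 0 ≤ x) (hy : 0 ≤ y) : x * y ≤ x ^ p + y ^ q := by
  have hq : 1 < q := by nlinarith
  rcases le_total y (x ^ (p-1)) with h | h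
  · have h1 : x * y ≤ x * x ^ (p-1) := mul_le_mul_of_nonneg_left h hx
    have h2 : x * x ^ (p-1) = x ^ p := by
      have : x ^ (1 + (p-1)) = x ^ (1:ℝ) * x ^ (p-1) :=
        Real.rpow_add' hx (by norm_num; linarith)
      rw [Real.rpow_one] at this
      rw [← this]; norm_num
    have h3 : (0:ℝ) ≤ y ^ q := Real.rpow_nonneg hy _
    linarith [h1.trans_eq h2]
  · have hxe : (x ^ (p-1)) ^ (q-1) = x := by
      rw [← Real.rpow_mul hx, hpq, Real.rpow_one]
    have h1 : x ≤ y ^ (q-1) := by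
      calc x = (x ^ (p-1)) ^ (q-1) := hxe.symm
        _ ≤ y ^ (q-1) := Real.rpow_le_rpow (Real.rpow_nonneg hx _) h (by linarith)
    have h2 : x * y ≤ y ^ (q-1) * y := mul_le_mul_of_nonneg_right h1 hy
    have h3 : y ^ (q-1) * y = y ^ q := by
      have : y ^ ((q-1) + 1) = y ^ (q-1) * y ^ (1:ℝ) :=
        Real.rpow_add' hy (by norm_num; linarith)
      rw [Real.rpow_one] at this
      rw [← this]; norm_num
    have h4 : (0:ℝ) ≤ x ^ p := Real.rpow_nonneg hx _
    linarith [h2.trans_eq h3]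

noncomputable def phiF (p : ℝ) (n : ℤ) : ℝ := (1 + |(n:ℝ)|) ^ (-p)

noncomputable def psiF (r : ℝ) (n : ℤ) : ℝ := (max |(n:ℝ)| 1) ^ (-r)

lemma phiF_nonneg (p : ℝ) (n : ℤ) : 0 ≤ phiF p n :=
  Real.rpow_nonneg (by positivity) _

lemma psiF_nonneg (r : ℝ) (n : ℤ) : 0 ≤ psiF r n :=
  Real.rpow_nonneg (le_max_of_le_right zero_le_one) _

lemma summable_psiF {r : ℝ} (hr : 1 < r) : Summable (psiF r) := by
  have h1 : Summable (fun n : ℤ => |(n:ℝ)| ^ (-r)) := Real.summable_abs_int_rpow hr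
  have h2 : Summable (fun n : ℤ => if n = 0 then (1:ℝ) else 0) :=
    summable_of_ne_finset_zero (s := {0}) (fun b hb => by
      simp only [Finset.mem_singleton] at hb; simp [hb])
  apply (h1.add h2).congr
  intro n
  by_cases hn : n = 0
  · subst hn
    simp [psiF, Real.zero_rpow (show -r ≠ 0 by intro h; rw [neg_eq_zero] at h; linarith)]
  · have h1n : (1:ℝ) ≤ |(n:ℝ)| := by
      rw [← Int.cast_abs]
      exact_mod_cast Int.one_le_abs (by simpa using hn)
    simp [psiF, hn, max_eq_left h1n]

lemma summable_phiF {p : ℝ} (hp : 1 < p) : Summable (phiF p) := by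
  apply Summable.of_nonneg_of_le (phiF_nonneg p) (fun n => ?_) (summable_psiF hp)
  unfold phiF psiF
  apply Real.rpow_le_rpow_of_nonpos (lt_of_lt_of_le one_pos (le_max_right _ _))
  · exact max_le (by linarith [abs_nonneg ((n:ℝ))]) (by linarith [abs_nonneg ((n:ℝ))])
  · linarith

lemma summable_phiF_shift {p : ℝ} (hp : 1 < p) (m : ℤ) :
    Summable (fun k : ℤ => phiF p (k - m)) :=
  ((Equiv.subRight m).summable_iff.mpr (summable_phiF hp)).congr (fun k => by
    simp [Equiv.subRight])

lemma summable_phiF_negshift {p : ℝ} (hp : 1 < p) (m : ℤ) :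
    Summable (fun k : ℤ => phiF p (-k - m)) :=
  (((Equiv.neg ℤ).trans (Equiv.subRight m)).summable_iff.mpr (summable_phiF hp)).congr
    (fun k => by simp [Equiv.subRight, Equiv.neg])

lemma tsum_phiF_shift (p : ℝ) (m : ℤ) :
    ∑' k : ℤ, phiF p (k - m) = ∑' n : ℤ, phiF p n := by
  rw [← Equiv.tsum_eq (Equiv.subRight m) (phiF p)]
  exact tsum_congr (fun k => by simp [Equiv.subRight])

lemma tsum_phiF_negshift (p : ℝ) (m : ℤ) :
    ∑' k : ℤ, phiF p (-k - m) = ∑' n : ℤ, phiF p n := by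
  rw [← Equiv.tsum_eq ((Equiv.neg ℤ).trans (Equiv.subRight m)) (phiF p)]
  exact tsum_congr (fun k => by simp [Equiv.subRight, Equiv.neg])

lemma phiF_bound (p : ℝ) (s k : ℤ) :
    (1 + |(|(s:ℝ)| - |(k:ℝ)|)|) ^ (-p) ≤ phiF p (k - |s|) + phiF p (-k - |s|) := by
  rcases le_total 0 k with hk | hk
  · have e1 : ((k - |s| : ℤ) : ℝ) = |(k:ℝ)| - |(s:ℝ)| := by
      push_cast
      rw [abs_of_nonneg (show (0:ℝ) ≤ (k:ℝ) by exact_mod_cast hk)]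
    have : phiF p (k - |s|) = (1 + |(|(s:ℝ)| - |(k:ℝ)|)|) ^ (-p) := by
      unfold phiF
      rw [e1, abs_sub_comm]
    linarith [phiF_nonneg p (-k - |s|)]
  · have e1 : ((-k - |s| : ℤ) : ℝ) = |(k:ℝ)| - |(s:ℝ)| := by
      push_cast
      rw [abs_of_nonpos (show (k:ℝ) ≤ 0 by exact_mod_cast hk)]
    have : phiF p (-k - |s|) = (1 + |(|(s:ℝ)| - |(k:ℝ)|)|) ^ (-p) := by
      unfold phiF
      rw [e1, abs_sub_comm]
    linarith [phiF_nonneg p (k - |s|)]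

lemma summable_g1 {p : ℝ} (hp : 1 < p) (s : ℤ) :
    Summable (fun k : ℤ => (1 + |(|(s:ℝ)| - |(k:ℝ)|)|) ^ (-p)) :=
  Summable.of_nonneg_of_le (fun k => Real.rpow_nonneg (by positivity) _)
    (fun k => phiF_bound p s k)
    ((summable_phiF_shift hp |s|).add (summable_phiF_negshift hp |s|))

lemma tsum_g1_le {p : ℝ} (hp : 1 < p) (s : ℤ) :
    ∑' k : ℤ, (1 + |(|(s:ℝ)| - |(k:ℝ)|)|) ^ (-p) ≤ 2 * ∑' n : ℤ, phiF p n := by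
  have h := Summable.tsum_le_tsum (phiF_bound p s) (summable_g1 hp s)
    ((summable_phiF_shift hp |s|).add (summable_phiF_negshift hp |s|))
  rw [Summable.tsum_add (summable_phiF_shift hp |s|) (summable_phiF_negshift hp |s|),
    tsum_phiF_shift, tsum_phiF_negshift] at h
  linarith

/-- Lemma 3.1(2): if `|A|_{β+} ≤ nA` and `|ζ|_β ≤ nζ`, then `Aζ` converges and
`|Aζ|_β ≤ C nA nζ`, with `C` depending only on `β`. -/
theorem stmt_7 (β : ℝ) (hβ : 0 < β) :
    ∃ C > 0, ∀ (A : ℤ → ℤ → Matrix (Fin 2) (Fin 2) ℂ) (ζ : ℤ → Fin 2 → ℂ) (nA nζ : ℝ),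
      (∀ s s' : ℤ,
        (1 + |(|(s : ℝ)| - |(s' : ℝ)|)|) * (max |(s : ℝ)| 1) ^ β * (max |(s' : ℝ)| 1) ^ β *
            mnorm (A s s') ≤ nA) →
      (∀ s : ℤ, vnorm (ζ s) * (max |(s : ℝ)| 1) ^ β ≤ nζ) →
      ∀ s : ℤ,
        Summable (fun k : ℤ => (A s k).mulVec (ζ k)) ∧
        vnorm (∑' k : ℤ, (A s k).mulVec (ζ k)) * (max |(s : ℝ)| 1) ^ β ≤ C * nA * nζ := by
  set q : ℝ := max 2 (1/β) with hqdef
  have hq2 : (2:ℝ) ≤ q := le_max_left _ _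
  have hq1 : (1:ℝ) < q := by linarith
  have hβq : 1 ≤ β * q := by
    have h : 1/β ≤ q := le_max_right _ _
    calc (1:ℝ) = β * (1/β) := by field_simp
      _ ≤ β * q := mul_le_mul_of_nonneg_left h hβ.le
  set p : ℝ := 1 + 1/(q-1) with hpdef
  have hq0 : (0:ℝ) < q - 1 := by linarith
  have hp1 : (1:ℝ) < p := by
    have h : 0 < 1/(q-1) := by positivity
    rw [hpdef]; linarith
  have hpq : (p-1)*(q-1) = 1 := by
    rw [hpdef]; field_simp; ring
  have hr2 : (1:ℝ) < 2*(β*q) := by linarith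
  set K1 := ∑' n : ℤ, phiF p n with hK1def
  set K2 := ∑' n : ℤ, psiF (2*(β*q)) n with hK2def
  have hK10 : 0 ≤ K1 := tsum_nonneg (phiF_nonneg p)
  have hK20 : 0 ≤ K2 := tsum_nonneg (psiF_nonneg _)
  have hs2 : (1:ℝ) ≤ Real.sqrt 2 := by
    rw [show (1:ℝ) = Real.sqrt 1 by simp]
    exact Real.sqrt_le_sqrt (by norm_num)
  refine ⟨2*Real.sqrt 2*(2*K1+K2)+1, by nlinarith, ?_⟩
  intro A ζ nA nζ hA hζ s
  have hnA : 0 ≤ nA :=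
    le_trans (mul_nonneg (mul_nonneg (mul_nonneg (by positivity)
      (Real.rpow_nonneg (by positivity) _)) (Real.rpow_nonneg (by positivity) _))
      (mnorm_nonneg _)) (hA 0 0)
  have hnζ : 0 ≤ nζ :=
    le_trans (mul_nonneg (vnorm_nonneg _) (Real.rpow_nonneg (by positivity) _)) (hζ 0)
  set ts : ℝ := max |(s:ℝ)| 1 with htsdef
  have hts0 : (0:ℝ) < ts := lt_of_lt_of_le one_pos (le_max_right _ _)
  have htsβ : (0:ℝ) < ts ^ β := Real.rpow_pos_of_pos hts0 _
  -- key pointwise estimate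
  have key : ∀ k : ℤ, mnorm (A s k) * vnorm (ζ k) * ts ^ β ≤
      nA * nζ * ((1 + |(|(s:ℝ)| - |(k:ℝ)|)|) ^ (-p) + psiF (2*(β*q)) k) := by
    intro k
    set D : ℝ := 1 + |(|(s:ℝ)| - |(k:ℝ)|)| with hDdef
    set tk : ℝ := max |(k:ℝ)| 1 with htkdef
    have hD0 : (0:ℝ) < D := by positivity
    have htk0 : (0:ℝ) < tk := lt_of_lt_of_le one_pos (le_max_right _ _)
    have htkβ : (0:ℝ) < tk ^ β := Real.rpow_pos_of_pos htk0 _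
    have h1 : D * ts ^ β * tk ^ β * mnorm (A s k) ≤ nA := hA s k
    have h2 : vnorm (ζ k) * tk ^ β ≤ nζ := hζ k
    have e2β : tk ^ (2*β) = tk ^ β * tk ^ β := by
      rw [← Real.rpow_add htk0]; ring_nf
    have hstep : mnorm (A s k) * vnorm (ζ k) * ts ^ β * (D * tk ^ (2*β)) ≤ nA * nζ := by
      have e : mnorm (A s k) * vnorm (ζ k) * ts ^ β * (D * tk ^ (2*β)) =
          (D * ts ^ β * tk ^ β * mnorm (A s k)) * (vnorm (ζ k) * tk ^ β) := by
        rw [e2β]; ring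
      rw [e]
      exact mul_le_mul h1 h2 (mul_nonneg (vnorm_nonneg _) htkβ.le) hnA
    have hpos : (0:ℝ) < D * tk ^ (2*β) := mul_pos hD0 (Real.rpow_pos_of_pos htk0 _)
    have hx : mnorm (A s k) * vnorm (ζ k) * ts ^ β ≤
        nA * nζ * (D ^ (-(1:ℝ)) * tk ^ (-(2*β))) := by
      have h3 : mnorm (A s k) * vnorm (ζ k) * ts ^ β ≤ nA * nζ / (D * tk ^ (2*β)) :=
        (le_div_iff₀ hpos).mpr hstep
      calc mnorm (A s k) * vnorm (ζ k) * ts ^ β ≤ nA * nζ / (D * tk ^ (2*β)) := h3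
        _ = nA * nζ * (D ^ (-(1:ℝ)) * tk ^ (-(2*β))) := by
            rw [Real.rpow_neg hD0.le, Real.rpow_one, Real.rpow_neg htk0.le]
            field_simp
    have hy : D ^ (-(1:ℝ)) * tk ^ (-(2*β)) ≤ D ^ (-p) + psiF (2*(β*q)) k := by
      have hyoung := young_aux hp1 hpq (Real.rpow_nonneg hD0.le (-(1:ℝ)))
        (Real.rpow_nonneg htk0.le (-(2*β)))
      have e1 : (D ^ (-(1:ℝ))) ^ p = D ^ (-p) := by
        rw [← Real.rpow_mul hD0.le]; norm_num
      have e2 : (tk ^ (-(2*β))) ^ q = tk ^ (-(2*(β*q))) := by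
        rw [← Real.rpow_mul htk0.le]; ring_nf
      rw [e1, e2] at hyoung
      exact hyoung.trans_eq (by rw [psiF])
    calc mnorm (A s k) * vnorm (ζ k) * ts ^ β ≤
        nA * nζ * (D ^ (-(1:ℝ)) * tk ^ (-(2*β))) := hx
      _ ≤ nA * nζ * (D ^ (-p) + psiF (2*(β*q)) k) :=
          mul_le_mul_of_nonneg_left hy (mul_nonneg hnA hnζ)
  -- comparison series
  set w : ℤ → ℝ := fun k => nA * nζ *
    ((1 + |(|(s:ℝ)| - |(k:ℝ)|)|) ^ (-p) + psiF (2*(β*q)) k) with hwdef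
  have hw0 : ∀ k, 0 ≤ w k := fun k => mul_nonneg (mul_nonneg hnA hnζ)
    (add_nonneg (Real.rpow_nonneg (by positivity) _) (psiF_nonneg _ _))
  have hwsum : Summable w :=
    (((summable_g1 hp1 s).add (summable_psiF hr2)).mul_left (nA * nζ))
  have hwtsum : ∑' k, w k ≤ nA * nζ * (2*K1 + K2) := by
    rw [hwdef, tsum_mul_left, Summable.tsum_add (summable_g1 hp1 s) (summable_psiF hr2)]
    apply mul_le_mul_of_nonneg_left _ (mul_nonneg hnA hnζ)
    exact add_le_add (tsum_g1_le hp1 s) le_rfl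
  -- norm bound on the terms
  have hnormle : ∀ k : ℤ, ‖(A s k).mulVec (ζ k)‖ ≤ 2 * w k / ts ^ β := by
    intro k
    have h1 : ‖(A s k).mulVec (ζ k)‖ ≤ 2 * mnorm (A s k) * vnorm (ζ k) :=
      norm_mulVec_le _ _
    have h2 : mnorm (A s k) * vnorm (ζ k) ≤ w k / ts ^ β :=
      (le_div_iff₀ htsβ).mpr (key k)
    calc ‖(A s k).mulVec (ζ k)‖ ≤ 2 * mnorm (A s k) * vnorm (ζ k) := h1
      _ = 2 * (mnorm (A s k) * vnorm (ζ k)) := by ring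
      _ ≤ 2 * (w k / ts ^ β) := by linarith
      _ = 2 * w k / ts ^ β := by ring
  have hbsum : Summable (fun k : ℤ => 2 * w k / ts ^ β) := by
    have := (hwsum.mul_left 2).div_const (ts ^ β)
    exact this.congr (fun k => by ring)
  have hsumm : Summable (fun k : ℤ => (A s k).mulVec (ζ k)) :=
    Summable.of_norm_bounded hbsum hnormle
  refine ⟨hsumm, ?_⟩
  have hnsum : Summable (fun k : ℤ => ‖(A s k).mulVec (ζ k)‖) :=
    Summable.of_nonneg_of_le (fun k => norm_nonneg _) hnormle hbsum
  have hTnorm : ‖∑' k : ℤ, (A s k).mulVec (ζ k)‖ ≤ ∑' k : ℤ, 2 * w k / ts ^ β :=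
    le_trans (norm_tsum_le_tsum_norm hnsum) (Summable.tsum_le_tsum hnormle hnsum hbsum)
  have htsum2 : ∑' k : ℤ, 2 * w k / ts ^ β = 2 / ts ^ β * ∑' k, w k := by
    rw [← tsum_mul_left]
    exact tsum_congr (fun k => by ring)
  have hfinal : vnorm (∑' k : ℤ, (A s k).mulVec (ζ k)) * ts ^ β ≤
      2 * Real.sqrt 2 * (nA * nζ * (2*K1 + K2)) := by
    have hv : vnorm (∑' k : ℤ, (A s k).mulVec (ζ k)) ≤
        Real.sqrt 2 * ‖∑' k : ℤ, (A s k).mulVec (ζ k)‖ := vnorm_le_norm _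
    have hW0 : 0 ≤ ∑' k, w k := tsum_nonneg hw0
    have step1 : vnorm (∑' k : ℤ, (A s k).mulVec (ζ k)) * ts ^ β ≤
        Real.sqrt 2 * (2 / ts ^ β * ∑' k, w k) * ts ^ β := by
      apply mul_le_mul_of_nonneg_right _ htsβ.le
      calc vnorm (∑' k : ℤ, (A s k).mulVec (ζ k)) ≤
          Real.sqrt 2 * ‖∑' k : ℤ, (A s k).mulVec (ζ k)‖ := hv
        _ ≤ Real.sqrt 2 * (2 / ts ^ β * ∑' k, w k) := by
            apply mul_le_mul_of_nonneg_left _ (by linarith)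
            rw [← htsum2]; exact hTnorm
    have step2 : Real.sqrt 2 * (2 / ts ^ β * ∑' k, w k) * ts ^ β =
        2 * Real.sqrt 2 * ∑' k, w k := by
      field_simp
    rw [step2] at step1
    calc vnorm (∑' k : ℤ, (A s k).mulVec (ζ k)) * ts ^ β ≤
        2 * Real.sqrt 2 * ∑' k, w k := step1
      _ ≤ 2 * Real.sqrt 2 * (nA * nζ * (2*K1 + K2)) := by
          apply mul_le_mul_of_nonneg_left hwtsum (by linarith)
  calc vnorm (∑' k : ℤ, (A s k).mulVec (ζ k)) * ts ^ β ≤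
      2 * Real.sqrt 2 * (nA * nζ * (2*K1 + K2)) := hfinal
    _ = 2 * Real.sqrt 2 * (2*K1 + K2) * (nA * nζ) := by ring
    _ ≤ (2 * Real.sqrt 2 * (2*K1 + K2) + 1) * (nA * nζ) := by
        nlinarith [mul_nonneg hnA hnζ]
    _ = (2 * Real.sqrt 2 * (2*K1 + K2) + 1) * nA * nζ := by ring
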